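/- Let A be a Hausdorff abelian topological group such that the evaluation map α_A : A → Â̂ is injective, and let K be a compact subgroup of A. Then K is dually closed in A (K = K^▷◁) and dually embedded in A (every continuous character of K extends to a continuous character of A). -/

import Mathlib

open scoped Topology

noncomputable section

/-- The circle group `T = R/Z`. -/
abbrev Torus := AddCircle (1 : ℝ)

/-- `Λ₁`, the image of `[-1/4, 1/4]` in `T = R/Z`. -/
def Lam : Set Torus := (fun x : ℝ => (x : Torus)) '' Set.Icc (-(1/4)) (1/4)

/-- The Pontryagin dual: continuous characters into `T = R/Z`, with the compact-open
topology (the topology on `ContinuousAddMonoidHom` is induced from `C(A, T)`). -/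
abbrev PDual (A : Type*) [AddCommGroup A] [TopologicalSpace A] [IsTopologicalAddGroup A] :=
  ContinuousAddMonoidHom A Torus

/-- The polar `S^▷ = {χ ∈ Â : χ(S) ⊆ Λ₁}` of a subset `S ⊆ A`. -/
def polar {A : Type*} [AddCommGroup A] [TopologicalSpace A] [IsTopologicalAddGroup A]
    (S : Set A) : Set (PDual A) := {χ | ∀ s ∈ S, χ s ∈ Lam}

/-- The prepolar `Φ^◁ = {a ∈ A : χ(a) ∈ Λ₁ for all χ ∈ Φ}` of a set `Φ ⊆ Â`. -/
def prepolar {A : Type*} [AddCommGroup A] [TopologicalSpace A] [IsTopologicalAddGroup A]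
    (Φ : Set (PDual A)) : Set A := {a | ∀ χ ∈ Φ, χ a ∈ Lam}

/-- The evaluation homomorphism `α_A : A → Â̂`, `α_A(a)(χ) = χ(a)`. -/
def evalHom {A : Type*} [AddCommGroup A] [TopologicalSpace A] [IsTopologicalAddGroup A]
    (a : A) : PDual (PDual A) where
  toFun := fun χ => χ a
  map_zero' := rfl
  map_add' := fun _ _ => rfl
  continuous_toFun := continuous_eval_const a


instance : Fact ((0:ℝ) < 1) := ⟨one_pos⟩


example : CompactSpace Torus := inferInstance
example : T2Space Torus := inferInstance
example : IsTopologicalAddGroup Torus := inferInstance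

lemma zero_mem_Lam : (0 : Torus) ∈ Lam :=
  ⟨0, by norm_num, by norm_num⟩

lemma Lam_mem_nhds : Lam ∈ 𝓝 (0 : Torus) := by
  have hopen : IsOpen ((fun x : ℝ => (x : Torus)) '' Set.Ioo (-(1/4)) (1/4)) := by
    exact (QuotientAddGroup.isOpenMap_coe (N := AddSubgroup.zmultiples (1:ℝ))) _ isOpen_Ioo
  refine Filter.mem_of_superset (hopen.mem_nhds ⟨0, by norm_num, by norm_num⟩) ?_
  exact Set.image_mono Set.Ioo_subset_Icc_self

lemma torus_coe_eq_coe {u v : ℝ} : (u : Torus) = (v : Torus) ↔ ∃ k : ℤ, u - v = k := by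
  show (QuotientAddGroup.mk u : Torus) = QuotientAddGroup.mk v ↔ _
  rw [QuotientAddGroup.eq]
  constructor
  · rintro h
    obtain ⟨k, hk⟩ := (AddSubgroup.mem_zmultiples_iff).1 h
    have hk' : (k:ℝ) = -u + v := by rw [← hk]; simp [zsmul_eq_mul]
    exact ⟨-k, by push_cast; linarith⟩
  · rintro ⟨k, hk⟩
    refine (AddSubgroup.mem_zmultiples_iff).2 ⟨-k, ?_⟩
    simp only [zsmul_eq_mul, mul_one]; push_cast; linarith

lemma zsmul_coe (n : ℤ) (s : ℝ) : n • ((s : Torus)) = (((n : ℝ) * s : ℝ) : Torus) := by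
  rw [← AddCircle.coe_zsmul]
  norm_num

lemma exists_nat_mul_mem (s : ℝ) (hs : s ∈ Set.Ioc (0:ℝ) (1/4)) :
    ∃ n : ℕ, (n:ℝ) * s ∈ Set.Ioc (1/4 : ℝ) (1/2) := by
  obtain ⟨h0, h4⟩ := hs
  refine ⟨⌊1/(4*s)⌋₊ + 1, ?_, ?_⟩
  · have h : 1/(4*s) < ((⌊1/(4*s)⌋₊ + 1 : ℕ) : ℝ) := by
      have := Nat.lt_floor_add_one (1/(4*s)); push_cast; linarith
    rw [div_lt_iff₀ (by positivity)] at h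
    nlinarith
  · have h : ((⌊1/(4*s)⌋₊ + 1 : ℕ) : ℝ) ≤ 1/(4*s) + 1 := by
      push_cast
      have := Nat.floor_le (a := 1/(4*s)) (by positivity)
      linarith
    have h2 := mul_le_mul_of_nonneg_right h h0.le
    have hs4 : (1/(4*s))*s = 1/4 := by field_simp
    nlinarith

lemma pos_case (t : ℝ) (ht : t ∈ Set.Ioc (0:ℝ) (1/4))
    (hmem : ∀ n : ℤ, n • ((t:ℝ) : Torus) ∈ Lam) : False := by
  obtain ⟨n, hn1, hn2⟩ := exists_nat_mul_mem t ht
  obtain ⟨u, hu, huq⟩ := hmem n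
  rw [show ((n:ℤ) • ((t:ℝ):Torus)) = (((n:ℝ)*t : ℝ) : Torus) by rw [zsmul_coe]; norm_num] at huq
  rw [torus_coe_eq_coe] at huq
  obtain ⟨k, hk⟩ := huq
  obtain ⟨hu1, hu2⟩ := hu
  have h1 : (k:ℝ) < 0 := by push_cast; linarith
  have h2 : (-1:ℝ) < k := by push_cast; linarith
  have : k < 0 := by exact_mod_cast h1
  have : (-1:ℤ) < k := by exact_mod_cast h2
  omega

lemma eq_zero_of_forall_zsmul_mem_Lam {x : Torus} (h : ∀ n : ℤ, n • x ∈ Lam) : x = 0 := by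
  by_contra hx
  have h1 := h 1
  rw [one_zsmul] at h1
  obtain ⟨s, hs, hsx⟩ := h1
  rcases lt_trichotomy s 0 with hneg | hzero | hpos
  · refine pos_case (-s) ⟨by linarith, by have := hs.1; norm_num at this ⊢; linarith⟩ ?_
    intro n
    have : n • ((-s : ℝ) : Torus) = (-n) • x := by
      rw [← hsx]
      show n • (((-s : ℝ)) : Torus) = -n • ((s:ℝ) : Torus)
      rw [zsmul_coe, zsmul_coe]; push_cast; ring_nf
    rw [this]; exact h (-n)
  · exact hx (by rw [← hsx]; show ((s:ℝ) : Torus) = 0; rw [hzero]; norm_num)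
  · refine pos_case s ⟨hpos, hs.2⟩ ?_
    intro n
    have : n • ((s : ℝ) : Torus) = n • x := by rw [← hsx]
    rw [this]; exact h n



lemma nsmul_coe (n : ℕ) (s : ℝ) : n • ((s : Torus)) = (((n : ℝ) * s : ℝ) : Torus) := by
  have := zsmul_coe (n : ℤ) s
  rw [natCast_zsmul] at this
  rw [this]; norm_num

lemma torus_coe_surj : Function.Surjective (fun r : ℝ => (r : Torus)) :=
  QuotientAddGroup.mk_surjective

/-- Closed proper subgroups of the circle are exactly the `m`-torsion subgroups. -/
lemma circle_structure (C : AddSubgroup Torus) (hC : IsClosed (C : Set Torus)) (hne : C ≠ ⊤) :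
    ∃ m : ℕ, 0 < m ∧ ∀ x : Torus, x ∈ C ↔ m • x = 0 := by
  set mkh : ℝ →+ Torus := QuotientAddGroup.mk' (AddSubgroup.zmultiples (1:ℝ)) with hmkh
  set P : AddSubgroup ℝ := C.comap mkh with hPdef
  have hmkc : Continuous mkh := continuous_quot_mk
  have hmem : ∀ r : ℝ, r ∈ P ↔ (r : Torus) ∈ C := fun r => Iff.rfl
  rcases AddSubgroup.dense_or_cyclic P with hdense | ⟨a, hP⟩
  · exfalso
    apply hne
    have hCd : Dense (C : Set Torus) := by
      have h1 : ((fun r : ℝ => (r : Torus)) '' (P : Set ℝ)) ⊆ (C : Set Torus) := by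
        rintro x ⟨r, hr, rfl⟩; exact hr
      have h2 : Dense ((fun r : ℝ => (r : Torus)) '' (P : Set ℝ)) := by
        have hcont : Continuous (fun r : ℝ => (r : Torus)) := continuous_quot_mk
        exact (torus_coe_surj.denseRange).dense_image hcont hdense
      exact h2.mono h1
    have := hCd.closure_eq
    rw [hC.closure_eq] at this
    exact SetLike.ext' this
  · -- P cyclic
    rw [← AddSubgroup.zmultiples_eq_closure] at hP
    have hsymm : ∀ b : ℝ, AddSubgroup.zmultiples b = AddSubgroup.zmultiples (-b) := by
      intro b
      ext x
      simp only [AddSubgroup.mem_zmultiples_iff]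
      exact ⟨fun ⟨k, hk⟩ => ⟨-k, by rw [← hk]; simp⟩, fun ⟨k, hk⟩ => ⟨-k, by rw [← hk]; simp⟩⟩
    have main : ∀ a : ℝ, 0 ≤ a → P = AddSubgroup.zmultiples a →
        ∃ m : ℕ, 0 < m ∧ ∀ x : Torus, x ∈ C ↔ m • x = 0 := by
      intro a ha0 hP
      have hone : ((1:ℝ) : Torus) = ((0:ℝ) : Torus) := torus_coe_eq_coe.2 ⟨1, by norm_num⟩
      have h1P : (1:ℝ) ∈ P := by
        rw [hmem]
        rw [hone]
        rw [show ((0:ℝ) : Torus) = 0 by norm_num]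
        exact C.zero_mem
      rw [hP] at h1P
      obtain ⟨k, hk⟩ := AddSubgroup.mem_zmultiples_iff.1 h1P
      have hk' : (k : ℝ) * a = 1 := by rw [← hk]; simp [zsmul_eq_mul]
      have ha : 0 < a := by
        rcases ha0.lt_or_eq with h | h
        · exact h
        · exfalso; rw [← h] at hk'; simp at hk'
      have hkpos : 0 < k := by
        by_contra h
        push_neg at h
        have : (k:ℝ) ≤ 0 := by exact_mod_cast h
        nlinarith
      have hkne : (k:ℝ) ≠ 0 := by positivity
      refine ⟨k.toNat, by omega, ?_⟩
      have hkt : ((k.toNat : ℕ) : ℝ) = (k : ℝ) := by exact_mod_cast Int.toNat_of_nonneg hkpos.le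
      have hainv : a = 1 / (k:ℝ) := by
        field_simp
        linarith [hk']
      intro x
      obtain ⟨r, rfl⟩ := torus_coe_surj x
      rw [← hmem, hP, AddSubgroup.mem_zmultiples_iff]
      rw [nsmul_coe, show (0:Torus) = ((0:ℝ):Torus) by norm_num, torus_coe_eq_coe]
      constructor
      · rintro ⟨j, hj⟩
        rw [zsmul_eq_mul] at hj
        refine ⟨j, ?_⟩
        rw [hkt, ← hj]
        have : (k:ℝ) * ((j:ℝ) * a) = (j:ℝ) := by rw [mul_left_comm, hk', mul_one]
        linarith
      · rintro ⟨i, hi⟩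
        rw [hkt] at hi
        refine ⟨i, ?_⟩
        rw [zsmul_eq_mul, hainv, mul_one_div, div_eq_iff hkne]
        linarith
    rcases le_or_gt 0 a with h | h
    · exact main a h hP
    · exact main (-a) (by linarith) (by rw [hP, hsymm])

/-- generator of the m-torsion -/
def torGen (m : ℕ) : Torus := ((1/(m:ℝ) : ℝ) : Torus)

lemma nsmul_torGen {m : ℕ} (hm : 0 < m) : m • torGen m = 0 := by
  rw [torGen, nsmul_coe]
  rw [show (0:Torus) = ((0:ℝ):Torus) by norm_num, torus_coe_eq_coe]
  refine ⟨1, ?_⟩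
  have : (m:ℝ) ≠ 0 := by positivity
  field_simp
  norm_num

lemma torsion_rep {m : ℕ} (hm : 0 < m) {u : Torus} (hu : m • u = 0) :
    ∃ k : ℤ, u = k • torGen m := by
  obtain ⟨r, rfl⟩ := torus_coe_surj u
  rw [nsmul_coe, show (0:Torus) = ((0:ℝ):Torus) by norm_num, torus_coe_eq_coe] at hu
  obtain ⟨i, hi⟩ := hu
  refine ⟨i, ?_⟩
  rw [torGen, zsmul_coe]
  show ((r:ℝ) : Torus) = _
  congr 1
  have hmne : (m:ℝ) ≠ 0 := by positivity
  field_simp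
  linarith

/-- The character `x ↦ n • x` of the circle. -/
def smulChar (n : ℤ) : ContinuousAddMonoidHom Torus Torus where
  toFun := fun x => n • x
  map_zero' := smul_zero n
  map_add' := fun a b => smul_add n a b
  continuous_toFun := continuous_zsmul n

@[simp] lemma smulChar_apply (n : ℤ) (x : Torus) : smulChar n x = n • x := rfl

/-- Separation for the circle. -/
lemma circle_sep (C : AddSubgroup Torus) (hC : IsClosed (C : Set Torus)) {t : Torus}
    (ht : t ∉ C) :
    ∃ φ : ContinuousAddMonoidHom Torus Torus, (∀ c ∈ C, φ c = 0) ∧ φ t ≠ 0 := by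
  have hne : C ≠ ⊤ := by rintro rfl; exact ht trivial
  obtain ⟨m, hm, hmem⟩ := circle_structure C hC hne
  refine ⟨smulChar m, fun c hc => ?_, fun h => ?_⟩
  · rw [smulChar_apply, natCast_zsmul]
    exact (hmem c).1 hc
  · rw [smulChar_apply, natCast_zsmul] at h
    exact ht ((hmem t).2 h)

/-- Extension of characters from closed subgroups of the circle. -/
lemma circle_ext (C : AddSubgroup Torus) (hC : IsClosed (C : Set Torus))
    (ψ : ContinuousAddMonoidHom C Torus) :
    ∃ η : ContinuousAddMonoidHom Torus Torus, ∀ c : C, η (c : Torus) = ψ c := by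
  rcases eq_or_ne C ⊤ with rfl | hne
  · refine ⟨ψ.comp ⟨⟨⟨fun x => ⟨x, trivial⟩, rfl⟩, fun _ _ => rfl⟩,
      Continuous.subtype_mk continuous_id _⟩, fun c => ?_⟩
    show ψ ⟨(c : Torus), trivial⟩ = ψ c
    congr 1
  · obtain ⟨m, hm, hmem⟩ := circle_structure C hC hne
    have hg : torGen m ∈ C := (hmem _).2 (nsmul_torGen hm)
    set u : Torus := ψ ⟨torGen m, hg⟩ with hu
    have hmu : m • u = 0 := by
      rw [hu, ← map_nsmul]
      have : (m • (⟨torGen m, hg⟩ : C)) = 0 := by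
        ext
        exact nsmul_torGen hm
      rw [this, map_zero]
    obtain ⟨k, hk⟩ := torsion_rep hm hmu
    refine ⟨smulChar k, fun c => ?_⟩
    have hcm : m • (c : Torus) = 0 := (hmem _).1 c.2
    obtain ⟨j, hj⟩ := torsion_rep hm hcm
    have hc : c = j • (⟨torGen m, hg⟩ : C) := by
      ext
      simpa using hj
    rw [smulChar_apply, hj, hc, map_zsmul, ← hu, hk]
    rw [smul_comm]

section Desc
variable {X Y : Type*} [AddCommGroup X] [TopologicalSpace X] [IsTopologicalAddGroup X]
  [AddCommGroup Y] [TopologicalSpace Y] [IsTopologicalAddGroup Y] [CompactSpace X] [T2Space Y]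

/-- Descend a character along a surjective continuous hom from a compact group. -/
lemma descend (q : ContinuousAddMonoidHom X Y) (hsurj : Function.Surjective q)
    (ψ : ContinuousAddMonoidHom X Torus) (hker : ∀ x, q x = 0 → ψ x = 0) :
    ∃ ψ' : ContinuousAddMonoidHom Y Torus, ∀ x, ψ' (q x) = ψ x := by
  have hinv : ∀ x x' : X, q x = q x' → ψ x = ψ x' := by
    intro x x' h
    have : ψ (x - x') = 0 := hker _ (by rw [map_sub, h, sub_self])
    rw [map_sub, sub_eq_zero] at this
    exact this
  classical
  let f : Y → Torus := fun y => ψ (hsurj y).choose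
  have hf : ∀ x, f (q x) = ψ x := fun x => hinv _ _ (hsurj (q x)).choose_spec
  have hcont : Continuous f := by
    have hq : Topology.IsQuotientMap (⇑q) :=
      (q.continuous.isClosedMap).isQuotientMap q.continuous hsurj
    rw [hq.continuous_iff]
    have : f ∘ ⇑q = ⇑ψ := funext hf
    rw [this]
    exact ψ.continuous
  have hzero : f 0 = 0 := hker _ (hsurj 0).choose_spec
  have hadd : ∀ y y' : Y, f (y + y') = f y + f y' := by
    intro y y'
    obtain ⟨x, rfl⟩ := hsurj y
    obtain ⟨x', rfl⟩ := hsurj y'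
    rw [hf, hf, ← map_add q, hf, map_add]
  exact ⟨{ toFun := f, map_zero' := hzero, map_add' := hadd, continuous_toFun := hcont }, hf⟩
end Desc

/-- Extension property: every character of a closed subgroup extends. -/
def ExtP (G : Type*) [AddCommGroup G] [TopologicalSpace G] [IsTopologicalAddGroup G] : Prop :=
  ∀ C : AddSubgroup G, IsClosed (C : Set G) → ∀ ψ : ContinuousAddMonoidHom C Torus,
    ∃ η : ContinuousAddMonoidHom G Torus, ∀ c : C, η (c : G) = ψ c

/-- Separation property: characters separate points from closed subgroups. -/
def SepP (G : Type*) [AddCommGroup G] [TopologicalSpace G] [IsTopologicalAddGroup G] : Prop :=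
  ∀ C : AddSubgroup G, IsClosed (C : Set G) → ∀ y : G, y ∉ C →
    ∃ η : ContinuousAddMonoidHom G Torus, (∀ c ∈ C, η c = 0) ∧ η y ≠ 0

section ProdStep

variable (G : Type*) [AddCommGroup G] [TopologicalSpace G] [IsTopologicalAddGroup G]
  [CompactSpace G] [T2Space G]

/-- The tslice subgroup `{t | (0, t) ∈ C}`. -/
def tslice (C : AddSubgroup (G × Torus)) : AddSubgroup Torus :=
  C.comap (AddMonoidHom.inr G Torus)

lemma mem_tslice {C : AddSubgroup (G × Torus)} {t : Torus} :
    t ∈ tslice G C ↔ ((0 : G), t) ∈ C := Iff.rfl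

lemma tslice_closed {C : AddSubgroup (G × Torus)} (hC : IsClosed (C : Set (G × Torus))) :
    IsClosed (tslice G C : Set Torus) :=
  hC.preimage (continuous_const.prodMk continuous_id)

lemma extP_prod (hG : ExtP G) : ExtP (G × Torus) := by
  intro C hC ψ
  -- extend the character of the tslice
  have hCcpt : IsCompact (C : Set (G × Torus)) := hC.isCompact
  haveI : CompactSpace C := isCompact_iff_compactSpace.mp hCcpt
  set C₀ := tslice G C with hC₀
  have hj : Continuous (fun t : C₀ => (⟨((0:G), (t : Torus)), t.2⟩ : C)) := by
    refine Continuous.subtype_mk ?_ _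
    exact continuous_const.prodMk continuous_subtype_val
  set ψ₀ : ContinuousAddMonoidHom C₀ Torus :=
    ψ.comp ⟨⟨⟨fun t => ⟨((0:G), (t : Torus)), t.2⟩, by ext <;> simp⟩,
      fun a b => by ext <;> simp⟩, hj⟩ with hψ₀
  obtain ⟨η₀, hη₀⟩ := circle_ext C₀ (tslice_closed G hC) ψ₀
  -- the corrected character
  set ψ' : ContinuousAddMonoidHom C Torus :=
    { toFun := fun c => ψ c - η₀ (c : G × Torus).2
      map_zero' := by simp
      map_add' := by
        intro a b
        simp only [map_add, AddSubgroup.coe_add, Prod.snd_add]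
        abel
      continuous_toFun := ψ.continuous.sub
        (η₀.continuous.comp (continuous_snd.comp continuous_subtype_val)) } with hψ'
  have hψ'app : ∀ c : C, ψ' c = ψ c - η₀ (c : G × Torus).2 := fun c => rfl
  -- project to G
  set Cb : AddSubgroup G := C.map (AddMonoidHom.fst G Torus) with hCb
  have hCbcpt : IsCompact (Cb : Set G) := by
    have : (Cb : Set G) = Prod.fst '' (C : Set (G × Torus)) := by
      rw [hCb]; exact AddSubgroup.coe_map _ _
    rw [this]
    exact hCcpt.image continuous_fst
  have hCbclosed : IsClosed (Cb : Set G) := hCbcpt.isClosed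
  set q : ContinuousAddMonoidHom C Cb :=
    { toFun := fun c => ⟨(c : G × Torus).1, AddSubgroup.mem_map_of_mem _ c.2⟩
      map_zero' := rfl
      map_add' := fun a b => rfl
      continuous_toFun := Continuous.subtype_mk (continuous_fst.comp continuous_subtype_val) _ }
    with hq
  have hqsurj : Function.Surjective q := by
    rintro ⟨x, hx⟩
    obtain ⟨c, hc, rfl⟩ := AddSubgroup.mem_map.1 hx
    exact ⟨⟨c, hc⟩, rfl⟩
  have hker : ∀ c : C, q c = 0 → ψ' c = 0 := by
    intro c hc
    have h1 : (c : G × Torus).1 = 0 := congrArg Subtype.val hc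
    have h2 : (c : G × Torus).2 ∈ C₀ := by
      rw [mem_tslice]
      have : ((0:G), (c : G × Torus).2) = (c : G × Torus) := by
        rw [← h1]
      rw [this]
      exact c.2
    have h3 : (⟨((0:G), ((c : G × Torus).2 : Torus)), h2⟩ : C) = c := by
      ext
      · exact h1.symm
      · rfl
    rw [hψ'app, hη₀ ⟨_, h2⟩]
    show ψ c - ψ₀ ⟨_, h2⟩ = 0
    rw [hψ₀]
    show ψ c - ψ (⟨((0:G), ((c : G × Torus).2 : Torus)), h2⟩ : C) = 0
    rw [h3, sub_self]
  obtain ⟨ψb, hψb⟩ := descend q hqsurj ψ' hker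
  obtain ⟨ηb, hηb⟩ := hG Cb hCbclosed ψb
  refine ⟨ηb.comp (ContinuousAddMonoidHom.fst G Torus) +
    η₀.comp (ContinuousAddMonoidHom.snd G Torus), ?_⟩
  intro c
  show ηb (c : G × Torus).1 + η₀ (c : G × Torus).2 = ψ c
  have h1 : ηb (c : G × Torus).1 = ψb (q c) := hηb (q c)
  rw [h1, hψb, hψ'app]
  abel

end ProdStep

open Pointwise in
lemma sepP_prod (G : Type*) [AddCommGroup G] [TopologicalSpace G] [IsTopologicalAddGroup G]
    [CompactSpace G] [T2Space G] (hsep : SepP G) (hext : ExtP (G × Torus)) :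
    SepP (G × Torus) := by
  intro C hC y hy
  have hCcpt : IsCompact (C : Set (G × Torus)) := hC.isCompact
  haveI : CompactSpace C := isCompact_iff_compactSpace.mp hCcpt
  set Cb : AddSubgroup G := C.map (AddMonoidHom.fst G Torus) with hCb
  have hCbcpt : IsCompact (Cb : Set G) := by
    have : (Cb : Set G) = Prod.fst '' (C : Set (G × Torus)) := AddSubgroup.coe_map _ _
    rw [this]; exact hCcpt.image continuous_fst
  by_cases hcase : y.1 ∈ Cb
  · -- there is c₀ ∈ C with c₀.1 = y.1
    obtain ⟨c₀, hc₀, hc₀1⟩ := AddSubgroup.mem_map.1 hcase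
    set t : Torus := y.2 - c₀.2 with ht
    have hyt : y = c₀ + ((0:G), t) := by
      ext
      · simp [← hc₀1]
      · simp [ht]
    have htC₀ : t ∉ tslice G C := by
      intro hmem
      exact hy (by rw [hyt]; exact C.add_mem hc₀ hmem)
    obtain ⟨φ, hφ0, hφt⟩ := circle_sep (tslice G C) (tslice_closed G hC) htC₀
    -- the subgroup C + ({0} × T)
    set S : AddSubgroup (G × Torus) := (⊥ : AddSubgroup G).prod (⊤ : AddSubgroup Torus) with hS
    have hScpt : IsCompact (S : Set (G × Torus)) := by
      have : (S : Set (G × Torus)) = {(0:G)} ×ˢ (Set.univ : Set Torus) := by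
        ext z
        simp only [hS, SetLike.mem_coe, AddSubgroup.mem_prod, AddSubgroup.mem_bot,
          AddSubgroup.mem_top, and_true, Set.mem_prod, Set.mem_singleton_iff, Set.mem_univ]
      rw [this]
      exact isCompact_singleton.prod isCompact_univ
    set C' : AddSubgroup (G × Torus) := C ⊔ S with hC'
    have hC'coe : (C' : Set (G × Torus)) = (C : Set (G × Torus)) + (S : Set (G × Torus)) := by
      ext z
      rw [Set.mem_add]
      constructor
      · intro hz
        obtain ⟨a, ha, b, hb, hab⟩ := AddSubgroup.mem_sup.1 hz
        exact ⟨a, ha, b, hb, hab⟩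
      · rintro ⟨a, ha, b, hb, rfl⟩
        exact AddSubgroup.mem_sup.2 ⟨a, ha, b, hb, rfl⟩
    have hC'closed : IsClosed (C' : Set (G × Torus)) := by
      rw [hC'coe]
      exact (hCcpt.add hScpt).isClosed
    haveI : CompactSpace (C' : Set (G × Torus)) := isCompact_iff_compactSpace.mp
      (by rw [hC'coe]; exact hCcpt.add hScpt)
    -- the quotient map from C × Torus
    have hmemS : ∀ s : Torus, ((0:G), s) ∈ S := by
      intro s
      rw [hS, AddSubgroup.mem_prod]
      exact ⟨AddSubgroup.mem_bot.2 rfl, trivial⟩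
    set q : ContinuousAddMonoidHom (C × Torus) C' :=
      { toFun := fun p => ⟨(p.1 : G × Torus) + ((0:G), p.2),
          AddSubgroup.mem_sup.2 ⟨_, p.1.2, _, hmemS p.2, rfl⟩⟩
        map_zero' := Subtype.ext (by
          show (((0:C) : G × Torus)) + ((0:G), (0:Torus)) = 0
          simp)
        map_add' := fun a b => Subtype.ext (by
          show ((a.1 + b.1 : C) : G × Torus) + ((0:G), a.2 + b.2) =
            ((a.1 : G × Torus) + ((0:G), a.2)) + ((b.1 : G × Torus) + ((0:G), b.2))
          rw [AddSubgroup.coe_add,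
            show ((0:G), a.2 + b.2) = ((0:G), a.2) + ((0:G), b.2) by ext <;> simp]
          abel)
        continuous_toFun := by
          refine Continuous.subtype_mk ?_ _
          exact ((continuous_subtype_val.comp continuous_fst).add
            (continuous_const.prodMk continuous_snd))
      } with hqdef
    have hqsurj : Function.Surjective q := by
      rintro ⟨z, hz⟩
      obtain ⟨a, ha, b, hb, hab⟩ := AddSubgroup.mem_sup.1 hz
      rw [hS, AddSubgroup.mem_prod, AddSubgroup.mem_bot] at hb
      refine ⟨(⟨a, ha⟩, b.2), ?_⟩
      ext
      · show a.1 + 0 = z.1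
        rw [← hab]; simp [hb.1]
      · show a.2 + b.2 = z.2
        rw [← hab]
        rfl
    set ψX : ContinuousAddMonoidHom (C × Torus) Torus :=
      { toFun := fun p => φ p.2
        map_zero' := by simp
        map_add' := by intro a b; simp
        continuous_toFun := φ.continuous.comp continuous_snd } with hψX
    have hker : ∀ p : C × Torus, q p = 0 → ψX p = 0 := by
      intro p hp
      have h0 : (p.1 : G × Torus) + ((0:G), p.2) = 0 := congrArg Subtype.val hp
      have h1 : (p.1 : G × Torus) = ((0:G), -p.2) := by
        have := congrArg (fun z => z - ((0:G), p.2)) h0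
        simpa [Prod.ext_iff] using this
      have h2 : (-p.2) ∈ tslice G C := by
        rw [mem_tslice, ← h1]
        exact p.1.2
      show φ p.2 = 0
      have := hφ0 _ h2
      rw [map_neg, neg_eq_zero] at this
      exact this
    obtain ⟨ψ', hψ'⟩ := descend q hqsurj ψX hker
    obtain ⟨η, hη⟩ := hext C' hC'closed ψ'
    refine ⟨η, ?_, ?_⟩
    · intro c hc
      have : (⟨c, AddSubgroup.mem_sup.2 ⟨c, hc, 0, S.zero_mem, add_zero c⟩⟩ : C') =
          q (⟨c, hc⟩, 0) := Subtype.ext (by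
        show c = c + ((0:G), (0:Torus))
        simp)
      calc η c = ψ' ⟨c, _⟩ := hη ⟨c, _⟩
        _ = ψ' (q (⟨c, hc⟩, 0)) := by rw [this]
        _ = ψX (⟨c, hc⟩, 0) := hψ' _
        _ = 0 := by show φ 0 = 0; simp
    · have hyC' : y ∈ C' := by
        rw [hyt]
        exact AddSubgroup.mem_sup.2 ⟨c₀, hc₀, _, hmemS t, rfl⟩
      have : (⟨y, hyC'⟩ : C') = q (⟨c₀, hc₀⟩, t) := Subtype.ext hyt
      have hval : η y = φ t := by
        calc η y = ψ' ⟨y, hyC'⟩ := hη ⟨y, hyC'⟩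
          _ = ψ' (q (⟨c₀, hc₀⟩, t)) := by rw [this]
          _ = ψX (⟨c₀, hc₀⟩, t) := hψ' _
          _ = φ t := rfl
      rw [hval]
      exact hφt
  · -- separate via the first factor
    obtain ⟨ηb, hηb0, hηby⟩ := hsep Cb hCbcpt.isClosed y.1 hcase
    refine ⟨ηb.comp (ContinuousAddMonoidHom.fst G Torus), ?_, ?_⟩
    · intro c hc
      exact hηb0 c.1 (AddSubgroup.mem_map.2 ⟨c, hc, rfl⟩)
    · exact hηby

section Transfer

variable {G G' : Type*} [AddCommGroup G] [TopologicalSpace G] [IsTopologicalAddGroup G]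
  [AddCommGroup G'] [TopologicalSpace G'] [IsTopologicalAddGroup G']

lemma extP_transfer (e : G ≃+ G') (he : Continuous e) (he' : Continuous e.symm)
    (h : ExtP G) : ExtP G' := by
  intro C' hC' ψ'
  set C : AddSubgroup G := C'.comap e.toAddMonoidHom with hCdef
  have hmemC : ∀ x : G, x ∈ C ↔ e x ∈ C' := fun x => Iff.rfl
  have hCclosed : IsClosed (C : Set G) := hC'.preimage he
  set jC : ContinuousAddMonoidHom C C' :=
    { toFun := fun c => ⟨e c, c.2⟩
      map_zero' := Subtype.ext (by simp)
      map_add' := fun a b => Subtype.ext (by simp [AddSubgroup.coe_add])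
      continuous_toFun := Continuous.subtype_mk (he.comp continuous_subtype_val) _ } with hjC
  obtain ⟨η, hη⟩ := h C hCclosed (ψ'.comp jC)
  set e'h : ContinuousAddMonoidHom G' G :=
    { toFun := e.symm
      map_zero' := by simp
      map_add' := by simp
      continuous_toFun := he' } with he'h
  refine ⟨η.comp e'h, ?_⟩
  intro c'
  have hmem : e.symm (c' : G') ∈ C := by rw [hmemC]; simp [c'.2]
  have h1 : η (e.symm (c' : G')) = ψ' (jC ⟨e.symm c', hmem⟩) := hη ⟨_, hmem⟩
  have h2 : jC ⟨e.symm (c' : G'), hmem⟩ = c' := Subtype.ext (by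
    show e (e.symm (c' : G')) = (c' : G')
    simp)
  show η (e.symm (c' : G')) = ψ' c'
  rw [h1, h2]

lemma sepP_transfer (e : G ≃+ G') (he : Continuous e) (he' : Continuous e.symm)
    (h : SepP G) : SepP G' := by
  intro C' hC' y' hy'
  set C : AddSubgroup G := C'.comap e.toAddMonoidHom with hCdef
  have hCclosed : IsClosed (C : Set G) := hC'.preimage he
  have hy : e.symm y' ∉ C := by
    intro hmem
    have : e (e.symm y') ∈ C' := hmem
    rw [AddEquiv.apply_symm_apply] at this
    exact hy' this
  obtain ⟨η, hη0, hηy⟩ := h C hCclosed _ hy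
  set e'h : ContinuousAddMonoidHom G' G :=
    { toFun := e.symm
      map_zero' := by simp
      map_add' := by simp
      continuous_toFun := he' } with he'h
  refine ⟨η.comp e'h, ?_, hηy⟩
  intro c' hc'
  refine hη0 (e.symm c') ?_
  show e (e.symm c') ∈ C'
  rw [AddEquiv.apply_symm_apply]
  exact hc'

end Transfer

section Fin

/-- The additive equivalence `(Fin n → Torus) × Torus ≃+ (Fin (n+1) → Torus)`. -/
def finConsEquiv (n : ℕ) : ((Fin n → Torus) × Torus) ≃+ (Fin (n+1) → Torus) where
  toFun p := Fin.cons p.2 p.1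
  invFun f := (fun j => f j.succ, f 0)
  left_inv p := by
    ext
    · simp
    · simp
  right_inv f := by
    funext i
    refine Fin.cases ?_ ?_ i
    · simp
    · intro j; simp
  map_add' p q := by
    funext i
    refine Fin.cases ?_ ?_ i
    · simp
    · intro j; simp

lemma finConsEquiv_continuous (n : ℕ) : Continuous (finConsEquiv n) := by
  have hcoe : ⇑(finConsEquiv n) =
      fun p : (Fin n → Torus) × Torus => (Fin.cons p.2 p.1 : Fin (n+1) → Torus) := rfl
  rw [hcoe]
  refine continuous_pi ?_
  intro i
  refine Fin.cases ?_ ?_ i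
  · simpa using (continuous_snd :
      Continuous fun p : (Fin n → Torus) × Torus => p.2)
  · intro j
    simpa using (by exact (continuous_apply j).comp continuous_fst :
      Continuous fun p : (Fin n → Torus) × Torus => p.1 j)

lemma finConsEquiv_symm_continuous (n : ℕ) : Continuous (finConsEquiv n).symm := by
  refine Continuous.prodMk ?_ (continuous_apply 0)
  exact continuous_pi fun j => continuous_apply _

lemma extP_fin : ∀ n : ℕ, ExtP (Fin n → Torus) := by
  intro n
  induction n with
  | zero =>
    intro C hC ψ
    refine ⟨0, ?_⟩
    intro c
    have hc : c = 0 := Subtype.ext (funext fun i => i.elim0)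
    rw [hc, map_zero]
    rfl
  | succ n ih =>
    exact extP_transfer (finConsEquiv n) (finConsEquiv_continuous n)
      (finConsEquiv_symm_continuous n) (extP_prod _ ih)

lemma sepP_fin : ∀ n : ℕ, SepP (Fin n → Torus) := by
  intro n
  induction n with
  | zero =>
    intro C hC y hy
    exact absurd (Subsingleton.elim y 0 ▸ C.zero_mem : y ∈ C) hy
  | succ n ih =>
    have hext : ExtP ((Fin n → Torus) × Torus) :=
      extP_prod _ (extP_fin n)
    exact sepP_transfer (finConsEquiv n) (finConsEquiv_continuous n)
      (finConsEquiv_symm_continuous n) (sepP_prod _ ih hext)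

end Fin

section Fintype

/-- Reindexing equivalence. -/
def reindexEquiv (ι : Type*) [Fintype ι] :
    (Fin (Fintype.card ι) → Torus) ≃+ (ι → Torus) where
  toFun g := fun i => g (Fintype.equivFin ι i)
  invFun f := fun k => f ((Fintype.equivFin ι).symm k)
  left_inv g := by funext k; simp
  right_inv f := by funext i; simp
  map_add' g g' := rfl

lemma extP_fintype (ι : Type*) [Fintype ι] : ExtP (ι → Torus) :=
  extP_transfer (reindexEquiv ι)
    (continuous_pi fun i => continuous_apply _)
    (continuous_pi fun k => continuous_apply _)
    (extP_fin _)

lemma sepP_fintype (ι : Type*) [Fintype ι] : SepP (ι → Torus) :=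
  sepP_transfer (reindexEquiv ι)
    (continuous_pi fun i => continuous_apply _)
    (continuous_pi fun k => continuous_apply _)
    (sepP_fin _)

end Fintype

section Infinite

variable {D : Type*}

/-- Projection onto a finite set of coordinates. -/
def proj (I : Set D) : ContinuousAddMonoidHom (D → Torus) (I → Torus) where
  toFun f := fun i => f i.1
  map_zero' := rfl
  map_add' _ _ := rfl
  continuous_toFun := continuous_pi fun i => continuous_apply _

/-- Character extension from compact subgroups of powers of the circle. -/
lemma KT_ext (C : AddSubgroup (D → Torus)) (hCcpt : IsCompact (C : Set (D → Torus)))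
    (ψ : ContinuousAddMonoidHom C Torus) :
    ∃ η : ContinuousAddMonoidHom (D → Torus) Torus, ∀ c : C, η (c : D → Torus) = ψ c := by
  haveI : CompactSpace C := isCompact_iff_compactSpace.mp hCcpt
  -- find a finite set of coordinates controlling ψ near 0
  have h1 : (⇑ψ) ⁻¹' Lam ∈ 𝓝 (0 : C) := by
    have hz : ψ (0 : C) = 0 := map_zero ψ
    have := (ψ.continuous.continuousAt (x := (0 : C))).preimage_mem_nhds
      (by show Lam ∈ 𝓝 (ψ (0 : C)); rw [hz]; exact Lam_mem_nhds)
    exact this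
  rw [nhds_subtype_eq_comap, Filter.mem_comap] at h1
  obtain ⟨U, hU, hUsub⟩ := h1
  rw [show ((0 : C) : D → Torus) = 0 from rfl, nhds_pi, Filter.mem_pi] at hU
  obtain ⟨I, hIfin, V, hV, hVsub⟩ := hU
  haveI := hIfin.fintype
  -- characters vanishing on the kernel of the projection
  have hvan : ∀ c : C, proj I (c : D → Torus) = 0 → ψ c = 0 := by
    intro c hc
    refine eq_zero_of_forall_zsmul_mem_Lam (x := ψ c) ?_
    intro n
    rw [← map_zsmul]
    refine hUsub ?_
    show ((n • c : C) : D → Torus) ∈ U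
    refine hVsub ?_
    intro d hd
    have hcd : (c : D → Torus) d = 0 := congrFun hc ⟨d, hd⟩
    show (n • (c : D → Torus)) d ∈ V d
    have : (n • (c : D → Torus)) d = 0 := by
      rw [Pi.smul_apply, hcd, smul_zero]
    rw [this]
    have h0 : V d ∈ 𝓝 ((0 : D → Torus) d) := hV d
    exact mem_of_mem_nhds h0
  -- descend to the image subgroup
  set Cb : AddSubgroup (I → Torus) := C.map (proj I).toAddMonoidHom with hCb
  have hCbcpt : IsCompact (Cb : Set (I → Torus)) := by
    have : (Cb : Set (I → Torus)) = (proj I) '' (C : Set (D → Torus)) :=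
      AddSubgroup.coe_map _ _
    rw [this]
    exact hCcpt.image (proj I).continuous
  set q : ContinuousAddMonoidHom C Cb :=
    { toFun := fun c => ⟨proj I (c : D → Torus), AddSubgroup.mem_map_of_mem _ c.2⟩
      map_zero' := rfl
      map_add' := fun a b => rfl
      continuous_toFun := Continuous.subtype_mk
        ((proj I).continuous.comp continuous_subtype_val) _ } with hq
  have hqsurj : Function.Surjective q := by
    rintro ⟨x, hx⟩
    obtain ⟨c, hc, rfl⟩ := AddSubgroup.mem_map.1 hx
    exact ⟨⟨c, hc⟩, rfl⟩
  have hker : ∀ c : C, q c = 0 → ψ c = 0 := by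
    intro c hc
    exact hvan c (congrArg Subtype.val hc)
  obtain ⟨ψb, hψb⟩ := descend q hqsurj ψ hker
  obtain ⟨ηb, hηb⟩ := extP_fintype (↥I) Cb hCbcpt.isClosed ψb
  refine ⟨ηb.comp (proj I), ?_⟩
  intro c
  show ηb (proj I (c : D → Torus)) = ψ c
  have h2 : ηb (proj I (c : D → Torus)) = ψb (q c) := hηb (q c)
  rw [h2, hψb]

/-- Character separation from compact subgroups of powers of the circle. -/
lemma KT_sep (C : AddSubgroup (D → Torus)) (hCcpt : IsCompact (C : Set (D → Torus)))
    {y : D → Torus} (hy : y ∉ C) :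
    ∃ η : ContinuousAddMonoidHom (D → Torus) Torus, (∀ c ∈ C, η c = 0) ∧ η y ≠ 0 := by
  have hC : IsClosed (C : Set (D → Torus)) := hCcpt.isClosed
  have hnhds : (C : Set (D → Torus))ᶜ ∈ 𝓝 y := hC.isOpen_compl.mem_nhds hy
  rw [nhds_pi, Filter.mem_pi] at hnhds
  obtain ⟨I, hIfin, V, hV, hVsub⟩ := hnhds
  haveI := hIfin.fintype
  set Cb : AddSubgroup (I → Torus) := C.map (proj I).toAddMonoidHom with hCb
  have hCbcpt : IsCompact (Cb : Set (I → Torus)) := by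
    have : (Cb : Set (I → Torus)) = (proj I) '' (C : Set (D → Torus)) :=
      AddSubgroup.coe_map _ _
    rw [this]
    exact hCcpt.image (proj I).continuous
  have hπy : proj I y ∉ Cb := by
    intro hmem
    obtain ⟨c, hc, hcy⟩ := AddSubgroup.mem_map.1 hmem
    have hcVC : c ∈ Set.pi I V := by
      intro d hd
      have : c d = y d := congrFun hcy ⟨d, hd⟩
      rw [this]
      exact mem_of_mem_nhds (hV d)
    exact (hVsub hcVC) hc
  obtain ⟨ηb, hηb0, hηby⟩ := sepP_fintype (↥I) Cb hCbcpt.isClosed _ hπy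
  refine ⟨ηb.comp (proj I), ?_, ?_⟩
  · intro c hc
    exact hηb0 _ (AddSubgroup.mem_map_of_mem _ hc)
  · exact hηby

end Infinite

variable {A : Type*} [AddCommGroup A] [TopologicalSpace A] [IsTopologicalAddGroup A]

/-- If `A` is Hausdorff with `α_A` injective and `K ≤ A` is a compact subgroup, then `K`
is dually closed (`K = K^▷◁`) and dually embedded (every continuous character of `K`
extends to `A`). -/
theorem compact_subgroup_dually_closed_embedded [T2Space A]
    (hinj : Function.Injective (evalHom : A → PDual (PDual A)))
    (K : AddSubgroup A) (hK : IsCompact (K : Set A)) :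
    prepolar (polar (K : Set A)) = (K : Set A) ∧
    Function.Surjective
      (fun χ : PDual A => χ.comp
        ({ K.subtype with continuous_toFun := continuous_subtype_val } :
          ContinuousAddMonoidHom K A)) := by
  classical
  set e : ContinuousAddMonoidHom A (PDual A → Torus) :=
    { toFun := fun a χ => χ a
      map_zero' := funext fun χ => map_zero χ
      map_add' := fun a b => funext fun χ => map_add χ a b
      continuous_toFun := continuous_pi fun χ => χ.continuous } with he
  have heinj : Function.Injective ⇑e := by
    intro a b hab
    apply hinj
    exact DFunLike.ext _ _ fun χ => congrFun hab χ
  set C : AddSubgroup (PDual A → Torus) := K.map e.toAddMonoidHom with hC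
  have hCcpt : IsCompact (C : Set (PDual A → Torus)) := by
    have : (C : Set (PDual A → Torus)) = ⇑e '' (K : Set A) := AddSubgroup.coe_map _ _
    rw [this]
    exact hK.image e.continuous
  constructor
  · -- dually closed
    ext a
    constructor
    · intro ha
      by_contra haK
      have haC : e a ∉ C := by
        intro hmem
        obtain ⟨k, hk, hka⟩ := AddSubgroup.mem_map.1 hmem
        exact haK (heinj hka ▸ hk)
      obtain ⟨η, hη0, hηy⟩ := KT_sep C hCcpt haC
      set χ₀ : PDual A := η.comp e with hχ₀
      have hχ₀K : ∀ s ∈ K, χ₀ s = 0 := fun s hs =>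
        hη0 _ (AddSubgroup.mem_map_of_mem _ hs)
      have hpolar : ∀ n : ℤ, ((smulChar n).comp χ₀) ∈ polar (K : Set A) := by
        intro n s hs
        show smulChar n (χ₀ s) ∈ Lam
        rw [hχ₀K s hs, map_zero]
        exact zero_mem_Lam
      have hall : ∀ n : ℤ, n • (χ₀ a) ∈ Lam := by
        intro n
        have := ha _ (hpolar n)
        exact this
      exact hηy (eq_zero_of_forall_zsmul_mem_Lam hall)
    · intro haK χ hχ
      exact hχ a haK
  · -- dually embedded
    intro ψ
    haveI : CompactSpace K := isCompact_iff_compactSpace.mp hK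
    set q : ContinuousAddMonoidHom K C :=
      { toFun := fun k => ⟨e (k : A), AddSubgroup.mem_map_of_mem _ k.2⟩
        map_zero' := Subtype.ext (by
          show e ((0 : K) : A) = 0
          rw [AddSubgroup.coe_zero, map_zero])
        map_add' := fun a b => Subtype.ext (by
          show e ((a + b : K) : A) = e (a : A) + e (b : A)
          rw [AddSubgroup.coe_add, map_add])
        continuous_toFun := Continuous.subtype_mk
          (e.continuous.comp continuous_subtype_val) _ } with hqdef
    have hqsurj : Function.Surjective q := by
      rintro ⟨x, hx⟩
      obtain ⟨k, hk, rfl⟩ := AddSubgroup.mem_map.1 hx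
      exact ⟨⟨k, hk⟩, rfl⟩
    have hker : ∀ k : K, q k = 0 → ψ k = 0 := by
      intro k hk
      have h1 : e (k : A) = 0 := congrArg Subtype.val hk
      have h2 : (k : A) = 0 := heinj (by rw [h1, map_zero])
      have h3 : k = 0 := Subtype.ext h2
      rw [h3, map_zero]
    obtain ⟨ψb, hψb⟩ := descend q hqsurj ψ hker
    obtain ⟨η, hη⟩ := KT_ext C hCcpt ψb
    refine ⟨η.comp e, ?_⟩
    refine DFunLike.ext _ _ fun k => ?_
    show η (e (k : A)) = ψ k
    have h1 : η (e (k : A)) = ψb (q k) := hη (q k)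
    rw [h1, hψb]

end
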